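/- Let the torus T² = Circle × Circle act on the unit sphere S⁵ = {(v,w,z) ∈ ℂ³ : |v|²+|w|²+|z|² = 1} by (s,t)·(v,w,z) = (stv, sw, tz). Then there is a homeomorphism Φ from the orbit space S⁵/T² to the unit sphere S³ = {(x,r,t) ∈ ℂ×ℝ×ℝ : |x|²+r²+t² = 1} such that for all u ∈ Circle and all (v,w,z) ∈ S⁵, writing Φ([v,w,z]) = (x,r,t), one has Φ([uv, w, z]) = (ux, r, t). -/

import Mathlib

/-- The unit sphere `S⁵ ⊂ ℂ³`. -/
abbrev SphereC3 : Type := {p : ℂ × ℂ × ℂ // ‖p.1‖ ^ 2 + ‖p.2.1‖ ^ 2 + ‖p.2.2‖ ^ 2 = 1}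

/-- The unit sphere `S³ ⊂ ℂ × ℝ × ℝ`. -/
abbrev SphereCRR : Type := {q : ℂ × ℝ × ℝ // ‖q.1‖ ^ 2 + q.2.1 ^ 2 + q.2.2 ^ 2 = 1}

/-- The defining `T² = Circle × Circle`-action `(s, t) · (v, w, z) = (s t v, s w, t z)`
on `S⁵`. -/
def actT2 (st : Circle × Circle) (x : SphereC3) : SphereC3 :=
  ⟨((st.1 : ℂ) * (st.2 : ℂ) * x.val.1, (st.1 : ℂ) * x.val.2.1, (st.2 : ℂ) * x.val.2.2), by
    have h := x.property; simpa [Circle.norm_coe, mul_pow] using h⟩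

/-- The auxiliary `Circle`-action `u · (v, w, z) = (u v, w, z)` on `S⁵`. -/
def actFirst (u : Circle) (x : SphereC3) : SphereC3 :=
  ⟨((u : ℂ) * x.val.1, x.val.2.1, x.val.2.2), by
    have h := x.property; simpa [Circle.norm_coe] using h⟩

/-- The orbit relation of the `T²`-action on `S⁵`. -/
def orbitRelS5T2 (x y : SphereC3) : Prop := ∃ st : Circle × Circle, actT2 st x = y

noncomputable section


/-- complex invariant -/
def n1 (p : ℂ × ℂ × ℂ) : ℂ := 4 * p.1 * (starRingEnd ℂ) p.2.1 * (starRingEnd ℂ) p.2.2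
def n2 (p : ℂ × ℂ × ℂ) : ℝ := ‖p.2.1‖^2 - 4*‖p.1‖^2*‖p.2.2‖^2
def n3 (p : ℂ × ℂ × ℂ) : ℝ := ‖p.1‖^2 - ‖p.2.2‖^2
def nn (p : ℂ × ℂ × ℂ) : ℝ := Real.sqrt (‖n1 p‖^2 + n2 p^2 + n3 p^2)

lemma norm_n1_sq (p : ℂ × ℂ × ℂ) :
    ‖n1 p‖^2 = 16*‖p.1‖^2*‖p.2.1‖^2*‖p.2.2‖^2 := by
  simp only [n1, norm_mul, RCLike.norm_conj, mul_pow]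
  have : ‖(4:ℂ)‖ = 4 := by norm_num
  rw [this]; ring

lemma nn_sq (p : ℂ × ℂ × ℂ) : nn p ^ 2 = ‖n1 p‖^2 + n2 p^2 + n3 p^2 := by
  rw [nn, Real.sq_sqrt]; positivity

lemma nn_pos {p : ℂ × ℂ × ℂ} (hp : ‖p.1‖ ^ 2 + ‖p.2.1‖ ^ 2 + ‖p.2.2‖ ^ 2 = 1) :
    0 < nn p := by
  rw [nn]
  apply Real.sqrt_pos.2
  rw [norm_n1_sq, n2, n3]
  set V := ‖p.1‖^2; set W := ‖p.2.1‖^2; set Z := ‖p.2.2‖^2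
  have hV : 0 ≤ V := by positivity
  have hW : 0 ≤ W := by positivity
  have hZ : 0 ≤ Z := by positivity
  nlinarith [sq_nonneg (W + 4*V*Z), sq_nonneg (V - Z), sq_nonneg (V + Z - 1/2), sq_nonneg (V*Z)]




def Psi (x : SphereC3) : SphereCRR :=
  ⟨(n1 x.val / (nn x.val : ℂ), n2 x.val / nn x.val, n3 x.val / nn x.val), by
    have h0 := nn_pos x.property
    have h1 : ‖n1 x.val / (nn x.val : ℂ)‖ ^ 2 = ‖n1 x.val‖^2 / nn x.val ^ 2 := by
      rw [norm_div, div_pow, Complex.norm_real, Real.norm_of_nonneg h0.le]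
    rw [h1, div_pow, div_pow, ← add_div, ← add_div, ← nn_sq,
      div_self (by positivity)]⟩

lemma Psi_cont : Continuous Psi := by
  apply Continuous.subtype_mk
  have hval : Continuous (fun x : SphereC3 => x.val) := continuous_subtype_val
  have h1 : Continuous fun x : SphereC3 => n1 x.val := by
    unfold n1
    exact ((continuous_const.mul (continuous_fst.comp hval)).mul
      (Complex.continuous_conj.comp ((continuous_fst.comp continuous_snd).comp hval))).mul
      (Complex.continuous_conj.comp ((continuous_snd.comp continuous_snd).comp hval))
  have h2 : Continuous fun x : SphereC3 => n2 x.val := by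
    unfold n2; fun_prop
  have h3 : Continuous fun x : SphereC3 => n3 x.val := by
    unfold n3; fun_prop
  have hn : Continuous fun x : SphereC3 => nn x.val := by
    unfold nn
    apply Real.continuous_sqrt.comp
    fun_prop
  have hne : ∀ x : SphereC3, nn x.val ≠ 0 := fun x => (nn_pos x.property).ne'
  refine Continuous.prodMk ?_ (Continuous.prodMk ?_ ?_)
  · exact h1.div (Complex.continuous_ofReal.comp hn) (fun x => by
      simpa using Complex.ofReal_ne_zero.2 (hne x))
  · exact h2.div hn hne
  · exact h3.div hn hne

lemma circle_norm (s : Circle) : ‖(s:ℂ)‖ = 1 := by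
  simpa using Circle.norm_coe s

lemma circle_mul_conj (s : Circle) : (s:ℂ) * (starRingEnd ℂ) (s:ℂ) = 1 := by
  rw [Complex.mul_conj]
  norm_cast
  simpa using Circle.normSq_coe s

lemma mu_le_one {b g h m : ℝ} (hb : 0 ≤ b) (hg : 0 ≤ g) (hm : 1 ≤ m)
    (e1 : b + Real.sqrt (g + h^2) = 1) (e2 : m*b + Real.sqrt (m*g + m^2*h^2) = 1) :
    m ≤ 1 := by
  have hm0 : (0:ℝ) ≤ m := by linarith
  have hsm : 1 ≤ Real.sqrt m := by
    rw [show (1:ℝ) = Real.sqrt 1 by simp]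
    exact Real.sqrt_le_sqrt hm
  have hsm2 : Real.sqrt m * Real.sqrt m = m := Real.mul_self_sqrt hm0
  have hsmm : Real.sqrt m ≤ m := by nlinarith
  have key1 : Real.sqrt m * b ≤ m * b := mul_le_mul_of_nonneg_right hsmm hb
  have key2 : Real.sqrt m * Real.sqrt (g + h^2) ≤ Real.sqrt (m*g + m^2*h^2) := by
    rw [← Real.sqrt_mul hm0]
    apply Real.sqrt_le_sqrt
    nlinarith [mul_nonneg (mul_nonneg hm0 (sub_nonneg.2 hm)) (sq_nonneg h)]
  have : Real.sqrt m * (b + Real.sqrt (g + h^2)) ≤ 1 := by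
    rw [mul_add]; linarith
  rw [e1, mul_one] at this
  nlinarith

lemma Psi_invariant (st : Circle × Circle) (x : SphereC3) : Psi (actT2 st x) = Psi x := by
  obtain ⟨s, t⟩ := st
  obtain ⟨⟨v, w, z⟩, hx⟩ := x
  have hs := circle_mul_conj s
  have ht := circle_mul_conj t
  have hn1 : n1 ((s:ℂ) * (t:ℂ) * v, (s:ℂ) * w, (t:ℂ) * z) = n1 (v, w, z) := by
    simp only [n1, map_mul]
    linear_combination (4*v*((starRingEnd ℂ) w)*((starRingEnd ℂ) z)*((t:ℂ)*(starRingEnd ℂ) (t:ℂ))) * hs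
      + (4*v*(starRingEnd ℂ) w*(starRingEnd ℂ) z) * ht
  have hn2 : n2 ((s:ℂ) * (t:ℂ) * v, (s:ℂ) * w, (t:ℂ) * z) = n2 (v, w, z) := by
    simp [n2, norm_mul, circle_norm]
  have hn3 : n3 ((s:ℂ) * (t:ℂ) * v, (s:ℂ) * w, (t:ℂ) * z) = n3 (v, w, z) := by
    simp [n3, norm_mul, circle_norm]
  apply Subtype.ext
  have hval : (actT2 (s, t) ⟨(v, w, z), hx⟩).val
      = ((s:ℂ) * (t:ℂ) * v, (s:ℂ) * w, (t:ℂ) * z) := rfl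
  simp only [Psi, hval, nn, hn1, hn2, hn3]


def mkC (c : ℂ) (h : ‖c‖ = 1) : Circle :=
  ⟨c, by simpa [Submonoid.unitSphere] using mem_sphere_zero_iff_norm.2 h⟩

@[simp] lemma mkC_coe (c : ℂ) (h : ‖c‖ = 1) : ((mkC c h : Circle) : ℂ) = c := rfl

lemma conj_mul_self (w : ℂ) : (starRingEnd ℂ) w * w = ((‖w‖^2 : ℝ) : ℂ) := by
  rw [mul_comm, Complex.mul_conj, Complex.normSq_eq_norm_sq]

set_option maxHeartbeats 1000000 in
lemma Psi_inj {x y : SphereC3} (hxy : Psi x = Psi y) : orbitRelS5T2 x y := by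
  obtain ⟨⟨v, w, z⟩, hx⟩ := x
  obtain ⟨⟨v', w', z'⟩, hy⟩ := y
  have hx' : ‖v‖^2 + ‖w‖^2 + ‖z‖^2 = 1 := hx
  have hy' : ‖v'‖^2 + ‖w'‖^2 + ‖z'‖^2 = 1 := hy
  set p : ℂ × ℂ × ℂ := (v, w, z) with hp
  set q : ℂ × ℂ × ℂ := (v', w', z') with hq
  have hN : 0 < nn p := nn_pos hx
  have hN' : 0 < nn q := nn_pos hy
  have hNC : (nn p : ℂ) ≠ 0 := Complex.ofReal_ne_zero.2 hN.ne'
  have hNC' : (nn q : ℂ) ≠ 0 := Complex.ofReal_ne_zero.2 hN'.ne'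
  have hval := congrArg Subtype.val hxy
  have E1 : n1 p / (nn p : ℂ) = n1 q / (nn q : ℂ) := congrArg Prod.fst hval
  have E2 : n2 p / nn p = n2 q / nn q := congrArg (fun r => r.2.1) hval
  have E3 : n3 p / nn p = n3 q / nn q := congrArg (fun r => r.2.2) hval
  clear hval hxy
  set m : ℝ := nn q / nn p with hm
  have hm0 : 0 < m := div_pos hN' hN
  have hmC : (m : ℂ) = (nn q : ℂ) / (nn p : ℂ) := by rw [hm]; push_cast; ring
  rw [div_eq_div_iff hNC hNC'] at E1
  rw [div_eq_div_iff hN.ne' hN'.ne'] at E2 E3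
  have hE1 : n1 q = (m : ℂ) * n1 p := by
    rw [hmC, div_mul_eq_mul_div, eq_div_iff hNC]
    linear_combination -E1
  have hE2 : n2 q = m * n2 p := by
    rw [hm, div_mul_eq_mul_div, eq_div_iff hN.ne']
    linarith
  have hE3 : n3 q = m * n3 p := by
    rw [hm, div_mul_eq_mul_div, eq_div_iff hN.ne']
    linarith
  have hnorm1 : ‖n1 q‖^2 = m^2 * ‖n1 p‖^2 := by
    rw [hE1, norm_mul, mul_pow, Complex.norm_real, Real.norm_of_nonneg hm0.le]
  have hn2p : n2 p = ‖w‖^2 - 4*‖v‖^2*‖z‖^2 := rfl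
  have hn2q : n2 q = ‖w'‖^2 - 4*‖v'‖^2*‖z'‖^2 := rfl
  have hn3p : n3 p = ‖v‖^2 - ‖z‖^2 := rfl
  have hn3q : n3 q = ‖v'‖^2 - ‖z'‖^2 := rfl
  have idAp : ‖n1 p‖^2 + (n2 p)^2 = (‖w‖^2 + 4*‖v‖^2*‖z‖^2)^2 := by
    rw [norm_n1_sq, hn2p]; show (16:ℝ)*‖v‖^2*‖w‖^2*‖z‖^2 + _ = _; ring
  have idAq : ‖n1 q‖^2 + (n2 q)^2 = (‖w'‖^2 + 4*‖v'‖^2*‖z'‖^2)^2 := by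
    rw [norm_n1_sq, hn2q]; show (16:ℝ)*‖v'‖^2*‖w'‖^2*‖z'‖^2 + _ = _; ring
  have hAeq : ‖w'‖^2 + 4*‖v'‖^2*‖z'‖^2 = m * (‖w‖^2 + 4*‖v‖^2*‖z‖^2) := by
    have h2 : (‖w'‖^2 + 4*‖v'‖^2*‖z'‖^2)^2 = (m * (‖w‖^2 + 4*‖v‖^2*‖z‖^2))^2 := by
      rw [← idAq, hnorm1, hE2]
      linear_combination m^2 * idAp
    exact (sq_eq_sq₀ (by positivity) (by positivity)).1 h2
  have hW' : ‖w'‖^2 = m * ‖w‖^2 := by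
    rw [hn2p, hn2q] at hE2; linarith
  have hVZ' : 4*‖v'‖^2*‖z'‖^2 = m * (4*‖v‖^2*‖z‖^2) := by
    rw [hn2p, hn2q] at hE2; linarith
  have con_p : ‖w‖^2 + Real.sqrt (4*‖v‖^2*‖z‖^2 + (n3 p)^2) = 1 := by
    rw [hn3p, show 4*‖v‖^2*‖z‖^2 + (‖v‖^2 - ‖z‖^2)^2 = (‖v‖^2 + ‖z‖^2)^2 by ring,
      Real.sqrt_sq (by positivity)]
    linarith
  have con_q : ‖w'‖^2 + Real.sqrt (4*‖v'‖^2*‖z'‖^2 + (n3 q)^2) = 1 := by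
    rw [hn3q, show 4*‖v'‖^2*‖z'‖^2 + (‖v'‖^2 - ‖z'‖^2)^2 = (‖v'‖^2 + ‖z'‖^2)^2 by ring,
      Real.sqrt_sq (by positivity)]
    linarith
  have hmain : m = 1 := by
    rcases le_total 1 m with h1 | h1
    · refine le_antisymm ?_ h1
      have con_q' : m * ‖w‖^2 + Real.sqrt (m * (4*‖v‖^2*‖z‖^2) + m^2 * (n3 p)^2) = 1 := by
        rw [← hW', ← hVZ', show m^2 * (n3 p)^2 = (m * n3 p)^2 by ring, ← hE3]
        exact con_q
      exact mu_le_one (by positivity) (by positivity) h1 con_p con_q'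
    · refine le_antisymm h1 ?_
      have hminv : 1 ≤ m⁻¹ := (one_le_inv₀ hm0).2 h1
      have ha : m⁻¹ * ‖w'‖^2 = ‖w‖^2 := by rw [hW']; field_simp
      have hb : m⁻¹ * (4*‖v'‖^2*‖z'‖^2) = 4*‖v‖^2*‖z‖^2 := by rw [hVZ']; field_simp
      have hc : (m⁻¹)^2 * (n3 q)^2 = (n3 p)^2 := by
        rw [hE3, mul_pow]; field_simp
      have con_p' : m⁻¹ * ‖w'‖^2 + Real.sqrt (m⁻¹ * (4*‖v'‖^2*‖z'‖^2) + (m⁻¹)^2 * (n3 q)^2) = 1 := by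
        rw [ha, hb, hc]; exact con_p
      have key := mu_le_one (by positivity) (by positivity) hminv con_q con_p'
      have hmm : m * m⁻¹ = 1 := mul_inv_cancel₀ hm0.ne'
      calc (1:ℝ) = m * m⁻¹ := hmm.symm
        _ ≤ m * 1 := mul_le_mul_of_nonneg_left key hm0.le
        _ = m := mul_one m
  rw [hmain] at hE1 hE2 hE3 hW' hVZ'
  simp only [one_mul, Complex.ofReal_one] at hE1 hE2 hE3 hW' hVZ'
  -- moduli are equal
  have hV : ‖v‖^2 = ‖v'‖^2 := by
    rw [hn3p, hn3q] at hE3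
    have hVZsum : ‖v‖^2 + ‖z‖^2 = ‖v'‖^2 + ‖z'‖^2 := by linarith
    linarith
  have hZ : ‖z‖^2 = ‖z'‖^2 := by
    rw [hn3p, hn3q] at hE3; linarith
  have hW : ‖w‖^2 = ‖w'‖^2 := hW'.symm
  have hnv : ‖v‖ = ‖v'‖ := (sq_eq_sq₀ (norm_nonneg _) (norm_nonneg _)).1 hV
  have hnw : ‖w‖ = ‖w'‖ := (sq_eq_sq₀ (norm_nonneg _) (norm_nonneg _)).1 hW
  have hnz : ‖z‖ = ‖z'‖ := (sq_eq_sq₀ (norm_nonneg _) (norm_nonneg _)).1 hZ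
  have hn1eq : 4*v*(starRingEnd ℂ) w*(starRingEnd ℂ) z
      = 4*v'*(starRingEnd ℂ) w'*(starRingEnd ℂ) z' := by
    exact hE1.symm
  have hvne : ‖v‖ ≠ 0 → v' ≠ 0 → True := fun _ _ => trivial
  have transfer : ∀ {a b : ℂ}, ‖a‖ = ‖b‖ → a = 0 → b = 0 := by
    intro a b hab ha
    rw [← norm_eq_zero, ← hab, ha, norm_zero]
  suffices hS : ∃ sc tc : ℂ, ‖sc‖ = 1 ∧ ‖tc‖ = 1 ∧ sc * tc * v = v' ∧ sc * w = w' ∧ tc * z = z' by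
    obtain ⟨sc, tc, hs1, ht1, g1, g2, g3⟩ := hS
    refine ⟨(mkC sc hs1, mkC tc ht1), Subtype.ext ?_⟩
    show (sc * tc * v, sc * w, tc * z) = (v', w', z')
    rw [g1, g2, g3]
  by_cases hw0 : w = 0
  · have hw0' : w' = 0 := transfer hnw hw0
    by_cases hz0 : z = 0
    · have hz0' : z' = 0 := transfer hnz hz0
      by_cases hv0 : v = 0
      · exact ⟨1, 1, norm_one, norm_one, by rw [hv0]; simpa using (transfer hnv hv0).symm,
          by rw [hw0, hw0', mul_zero], by rw [hz0, hz0', mul_zero]⟩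
      · have hvn : ‖v‖ ≠ 0 := norm_ne_zero_iff.2 hv0
        refine ⟨1, v'/v, norm_one, ?_, ?_, ?_, ?_⟩
        · rw [norm_div, ← hnv, div_self hvn]
        · field_simp
        · rw [hw0, hw0', mul_zero]
        · rw [hz0, hz0', mul_zero]
    · have hz0' : z' ≠ 0 := fun h => hz0 (transfer hnz.symm h)
      have hzn : ‖z‖ ≠ 0 := norm_ne_zero_iff.2 hz0
      by_cases hv0 : v = 0
      · have hv0' : v' = 0 := transfer hnv hv0
        refine ⟨1, z'/z, norm_one, ?_, ?_, ?_, ?_⟩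
        · rw [norm_div, ← hnz, div_self hzn]
        · rw [hv0, hv0', mul_zero]
        · rw [hw0, hw0', mul_zero]
        · field_simp
      · have hv0' : v' ≠ 0 := fun h => hv0 (transfer hnv.symm h)
        have hvn : ‖v‖ ≠ 0 := norm_ne_zero_iff.2 hv0
        refine ⟨v' * z / (v * z'), z'/z, ?_, ?_, ?_, ?_, ?_⟩
        · rw [norm_div, norm_mul, norm_mul, ← hnv, ← hnz, div_self (by positivity)]
        · rw [norm_div, ← hnz, div_self hzn]
        · field_simp
        · rw [hw0, hw0', mul_zero]
        · field_simp
  · have hw0' : w' ≠ 0 := fun h => hw0 (transfer hnw.symm h)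
    have hwn : ‖w‖ ≠ 0 := norm_ne_zero_iff.2 hw0
    by_cases hz0 : z = 0
    · have hz0' : z' = 0 := transfer hnz hz0
      by_cases hv0 : v = 0
      · have hv0' : v' = 0 := transfer hnv hv0
        refine ⟨w'/w, 1, ?_, norm_one, ?_, ?_, ?_⟩
        · rw [norm_div, ← hnw, div_self hwn]
        · rw [hv0, hv0', mul_zero]
        · field_simp
        · rw [hz0, hz0', mul_zero]
      · have hv0' : v' ≠ 0 := fun h => hv0 (transfer hnv.symm h)
        have hvn : ‖v‖ ≠ 0 := norm_ne_zero_iff.2 hv0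
        refine ⟨w'/w, v' * w / (v * w'), ?_, ?_, ?_, ?_, ?_⟩
        · rw [norm_div, ← hnw, div_self hwn]
        · rw [norm_div, norm_mul, norm_mul, ← hnv, ← hnw, div_self (by positivity)]
        · field_simp
        · field_simp
        · rw [hz0, hz0', mul_zero]
    · have hz0' : z' ≠ 0 := fun h => hz0 (transfer hnz.symm h)
      have hzn : ‖z‖ ≠ 0 := norm_ne_zero_iff.2 hz0
      by_cases hv0 : v = 0
      · have hv0' : v' = 0 := transfer hnv hv0
        refine ⟨w'/w, z'/z, ?_, ?_, ?_, ?_, ?_⟩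
        · rw [norm_div, ← hnw, div_self hwn]
        · rw [norm_div, ← hnz, div_self hzn]
        · rw [hv0, hv0', mul_zero]
        · field_simp
        · field_simp
      · -- the main case : all coordinates nonzero
        have HW : ((‖w'‖^2 : ℝ) : ℂ) = ((‖w‖^2 : ℝ) : ℂ) := by rw [hnw]
        have HZ : ((‖z'‖^2 : ℝ) : ℂ) = ((‖z‖^2 : ℝ) : ℂ) := by rw [hnz]
        have hkey : v * w' * z' = v' * (w * z) := by
          have hc : ((‖w‖^2 : ℝ) : ℂ) * ((‖z‖^2 : ℝ) : ℂ) ≠ 0 := by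
            apply mul_ne_zero <;>
              exact Complex.ofReal_ne_zero.2 (by positivity)
          apply mul_right_cancel₀ hc
          linear_combination (w*z*w'*z'/4) * hn1eq
            - v*w'*z'*((starRingEnd ℂ) z * z) * (conj_mul_self w)
            - v*w'*z'*(((‖w‖^2:ℝ)):ℂ) * (conj_mul_self z)
            + v'*w*z*((starRingEnd ℂ) z' * z') * (conj_mul_self w')
            + v'*w*z*(((‖w'‖^2:ℝ)):ℂ) * (conj_mul_self z')
            + v'*w*z*(((‖z'‖^2:ℝ)):ℂ) * HW
            + v'*w*z*(((‖w‖^2:ℝ)):ℂ) * HZ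
        refine ⟨w'/w, z'/z, ?_, ?_, ?_, ?_, ?_⟩
        · rw [norm_div, ← hnw, div_self hwn]
        · rw [norm_div, ← hnz, div_self hzn]
        · field_simp
          linear_combination hkey
        · field_simp
        · field_simp

lemma Psi_equiv (u : Circle) (x : SphereC3) :
    (Psi (actFirst u x)).val =
      ((u : ℂ) * (Psi x).val.1, (Psi x).val.2.1, (Psi x).val.2.2) := by
  obtain ⟨⟨v, w, z⟩, hx⟩ := x
  have hval : (actFirst u ⟨(v, w, z), hx⟩).val = ((u:ℂ) * v, w, z) := rfl
  have h1 : n1 ((u:ℂ) * v, w, z) = (u:ℂ) * n1 (v, w, z) := by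
    simp only [n1]; ring
  have h2 : n2 ((u:ℂ) * v, w, z) = n2 (v, w, z) := by
    simp [n2, norm_mul, circle_norm]
  have h3 : n3 ((u:ℂ) * v, w, z) = n3 (v, w, z) := by
    simp [n3, norm_mul, circle_norm]
  have hnn : nn ((u:ℂ) * v, w, z) = nn (v, w, z) := by
    rw [nn, h1, h2, h3, norm_mul, circle_norm, one_mul, ← nn]
  show (n1 _ / _, n2 _ / _, n3 _ / _) = _
  simp only [hval, h1, h2, h3, hnn]
  refine Prod.ext ?_ rfl
  show ((u:ℂ) * n1 (v,w,z)) / (nn (v,w,z) : ℂ) = (u:ℂ) * (n1 (v,w,z) / (nn (v,w,z) : ℂ))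
  rw [mul_div_assoc]

set_option maxHeartbeats 1600000 in
lemma Psi_surj : Function.Surjective Psi := by
  rintro ⟨⟨X, R, T⟩, hq⟩
  have hq' : ‖X‖^2 + R^2 + T^2 = 1 := hq
  set A0 : ℝ := Real.sqrt (R^2 + ‖X‖^2) with hA0def
  have hA0sq : A0^2 = R^2 + ‖X‖^2 := Real.sq_sqrt (by positivity)
  have hA0nonneg : 0 ≤ A0 := Real.sqrt_nonneg _
  have hA0R : |R| ≤ A0 := by
    rw [hA0def, ← Real.sqrt_sq_eq_abs]
    exact Real.sqrt_le_sqrt (by linarith [sq_nonneg ‖X‖])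
  have hA0R1 : -R ≤ A0 := by cases abs_le.1 hA0R; linarith
  have hA0R2 : R ≤ A0 := by cases abs_le.1 hA0R; linarith
  set g : ℝ → ℝ := fun l => l*(A0+R)/2 + Real.sqrt (l*(A0-R)/2 + l^2*T^2) with hgdef
  have hgcont : Continuous g := by
    apply Continuous.add
    · fun_prop
    · exact Real.continuous_sqrt.comp (by fun_prop)
  have hg0 : g 0 = 0 := by simp [hgdef]
  -- find l0 ≥ 0 with 1 ≤ g l0
  have hARnn : 0 ≤ A0 + R := by linarith
  have hl0 : ∃ l0 : ℝ, 0 ≤ l0 ∧ 1 ≤ g l0 := by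
    rcases lt_or_ge 0 (A0 + R) with hc1 | hc1
    · refine ⟨2/(A0+R), div_nonneg (by norm_num) hc1.le, ?_⟩
      have h1 : (2/(A0+R))*(A0+R)/2 = 1 := by field_simp
      rw [hgdef]
      simp only []
      rw [h1]
      linarith [Real.sqrt_nonneg ((2/(A0+R))*(A0-R)/2 + (2/(A0+R))^2*T^2)]
    · have hAR0 : A0 + R = 0 := le_antisymm hc1 hARnn
      rcases lt_or_ge 0 A0 with hc2 | hc2
      · refine ⟨1/A0, div_nonneg zero_le_one hA0nonneg, ?_⟩
        have hAmR : A0 - R = 2*A0 := by linarith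
        have h1 : (1/A0)*(A0-R)/2 = 1 := by rw [hAmR]; field_simp
        rw [hgdef]; simp only []
        rw [hAR0, h1]
        have h2 : (1:ℝ) ≤ Real.sqrt (1 + (1/A0)^2*T^2) := by
          rw [Real.le_sqrt' zero_lt_one, one_pow]
          have hTT := sq_nonneg ((1/A0)*T)
          rw [mul_pow] at hTT
          linarith
        calc (1:ℝ) ≤ Real.sqrt (1 + (1/A0)^2*T^2) := h2
          _ = (1/A0)*0/2 + Real.sqrt (1 + (1/A0)^2*T^2) := by ring_nf
      · have hA00 : A0 = 0 := le_antisymm hc2 hA0nonneg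
        have h0 : R^2 + ‖X‖^2 = 0 := by rw [← hA0sq, hA00]; ring
        have hR : R = 0 := by
          have : R^2 = 0 := by linarith [sq_nonneg R, sq_nonneg ‖X‖]
          exact pow_eq_zero_iff (by norm_num) |>.1 this
        have hX : ‖X‖ = 0 := by
          have : ‖X‖^2 = 0 := by linarith [sq_nonneg R, sq_nonneg ‖X‖]
          exact pow_eq_zero_iff (by norm_num) |>.1 this
        have hT2 : T^2 = 1 := by rw [hX, hR] at hq'; linarith
        refine ⟨1, zero_le_one, ?_⟩
        rw [hgdef]; simp only []
        rw [hA00, hR]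
        have : (1:ℝ)*(0+0)/2 + Real.sqrt (1*(0-0)/2 + 1^2*T^2) = Real.sqrt (T^2) := by
          norm_num
        rw [this, hT2]
        simp
  obtain ⟨l0, hl00, hl01⟩ := hl0
  obtain ⟨l, hlmem, hgl⟩ := intermediate_value_Icc hl00 hgcont.continuousOn
    (by rw [hg0]; exact ⟨zero_le_one, hl01⟩ : (1:ℝ) ∈ Set.Icc (g 0) (g l0))
  have hl0' : 0 ≤ l := hlmem.1
  have hlpos : 0 < l := by
    rcases eq_or_lt_of_le hl0' with h | h
    · exfalso; rw [← h, hg0] at hgl; norm_num at hgl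
    · exact h
  -- define the moduli
  set b : ℝ := l*(A0+R)/2 with hbdef
  set c : ℝ := l*(A0-R)/2 with hcdef
  have hb0 : 0 ≤ b := by
    rw [hbdef]
    exact div_nonneg (mul_nonneg hl0' hARnn) (by norm_num)
  have hc0 : 0 ≤ c := by
    rw [hcdef]
    exact div_nonneg (mul_nonneg hl0' (by linarith)) (by norm_num)
  have hglc : b + Real.sqrt (c + l^2*T^2) = 1 := hgl
  set S : ℝ := Real.sqrt (c + l^2*T^2) with hSdef
  have hS0 : 0 ≤ S := Real.sqrt_nonneg _
  have hSsq : S^2 = c + l^2*T^2 := Real.sq_sqrt (by positivity)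
  have hSlT : |l*T| ≤ S := by
    rw [hSdef, ← Real.sqrt_sq_eq_abs]
    refine Real.sqrt_le_sqrt ?_
    have h' := sq_nonneg (l*T)
    rw [mul_pow] at h' ⊢
    linarith
  have hSlT1 : -(l*T) ≤ S := by cases abs_le.1 hSlT; linarith
  have hSlT2 : l*T ≤ S := by cases abs_le.1 hSlT; linarith
  set V : ℝ := (S + l*T)/2 with hVdef
  set Z : ℝ := (S - l*T)/2 with hZdef
  have hV0 : 0 ≤ V := by rw [hVdef]; linarith
  have hZ0 : 0 ≤ Z := by rw [hZdef]; linarith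
  have hW0 : 0 ≤ b := hb0
  have hsum : V + b + Z = 1 := by rw [hVdef, hZdef]; linarith
  have hVZ : 4*V*Z = c := by rw [hVdef, hZdef]; linear_combination hSsq
  have h16 : 16*V*b*Z = l^2*‖X‖^2 := by
    have h' : 16*V*b*Z = 4*b*(4*V*Z) := by ring
    rw [h', hVZ, hbdef, hcdef]
    linear_combination l^2 * hA0sq
  -- the phase
  set ph : ℂ := if X = 0 then 1 else X / (‖X‖ : ℂ) with hphdef
  have hph : ‖ph‖ = 1 := by
    rw [hphdef]
    split_ifs with h
    · exact norm_one
    · rw [norm_div, Complex.norm_real, Real.norm_of_nonneg (norm_nonneg X)]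
      exact div_self (norm_ne_zero_iff.2 h)
  set v0 : ℂ := (Real.sqrt V : ℂ) * ph with hv0def
  set w0 : ℂ := (Real.sqrt b : ℂ) with hw0def
  set z0 : ℂ := (Real.sqrt Z : ℂ) with hz0def
  have hnv0 : ‖v0‖^2 = V := by
    rw [hv0def, norm_mul, hph, mul_one, Complex.norm_real,
      Real.norm_of_nonneg (Real.sqrt_nonneg V), Real.sq_sqrt hV0]
  have hnw0 : ‖w0‖^2 = b := by
    rw [hw0def, Complex.norm_real, Real.norm_of_nonneg (Real.sqrt_nonneg b), Real.sq_sqrt hW0]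
  have hnz0 : ‖z0‖^2 = Z := by
    rw [hz0def, Complex.norm_real, Real.norm_of_nonneg (Real.sqrt_nonneg Z), Real.sq_sqrt hZ0]
  have hmem : ‖v0‖^2 + ‖w0‖^2 + ‖z0‖^2 = 1 := by rw [hnv0, hnw0, hnz0]; linarith
  refine ⟨⟨(v0, w0, z0), hmem⟩, ?_⟩
  -- compute the image
  have key1 : n1 (v0, w0, z0) = ((l:ℝ):ℂ) * X := by
    have hconjw : (starRingEnd ℂ) w0 = w0 := by rw [hw0def, Complex.conj_ofReal]
    have hconjz : (starRingEnd ℂ) z0 = z0 := by rw [hz0def, Complex.conj_ofReal]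
    have hmod : 4 * Real.sqrt V * Real.sqrt b * Real.sqrt Z = l * ‖X‖ := by
      have h1 : (4 * Real.sqrt V * Real.sqrt b * Real.sqrt Z)^2 = (l * ‖X‖)^2 := by
        rw [mul_pow, mul_pow, mul_pow, Real.sq_sqrt hV0, Real.sq_sqrt hW0, Real.sq_sqrt hZ0,
          mul_pow]
        linear_combination h16
      exact (sq_eq_sq₀ (by positivity) (by positivity)).1 h1
    show (4:ℂ) * v0 * _ * _ = _
    rw [hconjw, hconjz, hv0def, hw0def, hz0def]
    rcases eq_or_ne X 0 with hX | hX
    · have : l * ‖X‖ = 0 := by rw [hX, norm_zero, mul_zero]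
      have hzero : Real.sqrt V * Real.sqrt b * Real.sqrt Z = 0 := by linarith [hmod]
      rw [hX, mul_zero]
      push_cast
      rcases mul_eq_zero.1 hzero with h | h
      · rcases mul_eq_zero.1 h with h' | h' <;> rw [h'] <;> push_cast <;> ring
      · rw [h]; push_cast; ring
    · have hXn : (‖X‖ : ℂ) ≠ 0 := Complex.ofReal_ne_zero.2 (norm_ne_zero_iff.2 hX)
      calc (4:ℂ) * ((Real.sqrt V : ℂ) * ph) * (Real.sqrt b : ℂ) * (Real.sqrt Z : ℂ)
          = (((4 * Real.sqrt V * Real.sqrt b * Real.sqrt Z : ℝ)) : ℂ) * ph := by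
            push_cast; ring
        _ = (((l * ‖X‖ : ℝ)) : ℂ) * ph := by rw [hmod]
        _ = ((l:ℝ):ℂ) * X := by
            rw [hphdef, if_neg hX]
            have hXa : ((‖X‖ : ℝ) : ℂ) ≠ 0 := hXn
            push_cast
            field_simp [hXa]
  have key2 : n2 (v0, w0, z0) = l * R := by
    show ‖w0‖^2 - 4*‖v0‖^2*‖z0‖^2 = l * R
    rw [hnw0, hnv0, hnz0, hbdef]
    linear_combination -hVZ - hcdef
  have key3 : n3 (v0, w0, z0) = l * T := by
    show ‖v0‖^2 - ‖z0‖^2 = l * T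
    rw [hnv0, hnz0, hVdef, hZdef]; ring
  have keyN : nn (v0, w0, z0) = l := by
    rw [nn, key1, key2, key3]
    have : ‖((l:ℝ):ℂ) * X‖^2 = l^2 * ‖X‖^2 := by
      rw [norm_mul, Complex.norm_real, Real.norm_of_nonneg hlpos.le, mul_pow]
    rw [this]
    rw [show l^2*‖X‖^2 + (l*R)^2 + (l*T)^2 = l^2 * (‖X‖^2 + R^2 + T^2) by ring, hq',
      mul_one, Real.sqrt_sq hlpos.le]
  apply Subtype.ext
  show (n1 _ / _, n2 _ / _, n3 _ / _) = (X, R, T)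
  rw [key1, key2, key3, keyN]
  have hlC : ((l:ℝ):ℂ) ≠ 0 := Complex.ofReal_ne_zero.2 hlpos.ne'
  refine Prod.ext ?_ (Prod.ext ?_ ?_)
  · show ((l:ℝ):ℂ) * X / ((l:ℝ):ℂ) = X
    rw [mul_comm, mul_div_assoc, div_self hlC, mul_one]
  · show l * R / l = R
    rw [mul_comm, mul_div_assoc, div_self hlpos.ne', mul_one]
  · show l * T / l = T
    rw [mul_comm, mul_div_assoc, div_self hlpos.ne', mul_one]

instance : CompactSpace SphereC3 := by
  refine isCompact_iff_compactSpace.1 ?_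
  have hclosed : IsClosed {p : ℂ × ℂ × ℂ | ‖p.1‖^2+‖p.2.1‖^2+‖p.2.2‖^2 = 1} :=
    isClosed_eq (by fun_prop) continuous_const
  have hbdd : Bornology.IsBounded {p : ℂ × ℂ × ℂ | ‖p.1‖^2+‖p.2.1‖^2+‖p.2.2‖^2 = 1} := by
    apply Bornology.IsBounded.subset (Metric.isBounded_closedBall (x := (0:ℂ × ℂ × ℂ)) (r := 1))
    intro p hp
    have hp' : ‖p.1‖^2+‖p.2.1‖^2+‖p.2.2‖^2 = 1 := hp
    have h1 : ‖p.1‖ ≤ 1 := by nlinarith [norm_nonneg p.1, norm_nonneg p.2.1, norm_nonneg p.2.2, sq_nonneg (‖p.1‖-1)]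
    have h2 : ‖p.2.1‖ ≤ 1 := by nlinarith [norm_nonneg p.1, norm_nonneg p.2.1, norm_nonneg p.2.2, sq_nonneg (‖p.2.1‖-1)]
    have h3 : ‖p.2.2‖ ≤ 1 := by nlinarith [norm_nonneg p.1, norm_nonneg p.2.1, norm_nonneg p.2.2, sq_nonneg (‖p.2.2‖-1)]
    simp only [Metric.mem_closedBall, dist_zero_right]
    rw [Prod.norm_def, Prod.norm_def]
    exact max_le h1 (max_le h2 h3)
  exact Metric.isCompact_of_isClosed_isBounded hclosed hbdd

end

/-- The orbit space `S⁵ / T²` is homeomorphic to `S³ ⊂ ℂ × ℝ × ℝ`, in a way such that the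
induced action `u · (v, w, z) = (u v, w, z)` corresponds to `u · (x, r, t) = (u x, r, t)`. -/
theorem orbit_space_S5_T2_homeo_S3 :
    ∃ Φ : Quot orbitRelS5T2 ≃ₜ SphereCRR,
      ∀ (u : Circle) (x : SphereC3),
        (Φ (Quot.mk orbitRelS5T2 (actFirst u x))).val =
          ((u : ℂ) * (Φ (Quot.mk orbitRelS5T2 x)).val.1,
            (Φ (Quot.mk orbitRelS5T2 x)).val.2.1,
            (Φ (Quot.mk orbitRelS5T2 x)).val.2.2) := by
  have hresp : ∀ a b : SphereC3, orbitRelS5T2 a b → Psi a = Psi b := by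
    rintro a b ⟨st, hst⟩
    rw [← hst, Psi_invariant]
  let f : Quot orbitRelS5T2 → SphereCRR := Quot.lift Psi hresp
  have hcont : Continuous f := continuous_quot_lift hresp Psi_cont
  have hbij : Function.Bijective f := by
    constructor
    · intro qa qb
      induction qa using Quot.ind with | _ a =>
      induction qb using Quot.ind with | _ b =>
      intro h
      exact Quot.sound (Psi_inj h)
    · intro y
      obtain ⟨x, hx⟩ := Psi_surj y
      exact ⟨Quot.mk _ x, hx⟩
  let E : Quot orbitRelS5T2 ≃ SphereCRR := Equiv.ofBijective f hbij
  have hcontE : Continuous E := hcont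
  refine ⟨Continuous.homeoOfEquivCompactToT2 (f := E) hcontE, ?_⟩
  intro u x
  have hΦ : ∀ y : SphereC3,
      Continuous.homeoOfEquivCompactToT2 (f := E) hcontE (Quot.mk orbitRelS5T2 y) = Psi y :=
    fun y => rfl
  rw [hΦ, hΦ]
  exact Psi_equiv u x
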